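/- A ring R is central reduced if and only if the Dorroh extension D(R, ℤ) is central reduced. -/

import Mathlib

/-- A ring is central reduced if every nilpotent element is central. -/
def IsCentralReduced (R : Type*) [Ring R] : Prop :=
  ∀ a : R, IsNilpotent a → a ∈ Set.center R

lemma fst_pow' {R : Type*} [Ring R] (a : Unitization ℤ R) (k : ℕ) :
    (a ^ k).fst = a.fst ^ k := by
  induction k with
  | zero => simp
  | succ n ih => rw [pow_succ, pow_succ, Unitization.fst_mul, ih]

lemma inr_pow' {R : Type*} [Ring R] (r : R) (k : ℕ) :
    ((r : Unitization ℤ R)) ^ (k + 1) = ((r ^ (k + 1) : R) : Unitization ℤ R) := by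
  induction k with
  | zero => simp
  | succ n ih => rw [pow_succ, ih, ← Unitization.inr_mul, ← pow_succ]

/-- The Dorroh extension `D(R, ℤ)` is the unitization of `R` over `ℤ`. -/
theorem stmt_17 (R : Type*) [Ring R] :
    IsCentralReduced R ↔ IsCentralReduced (Unitization ℤ R) := by
  constructor
  · intro h a ⟨k, hk⟩
    have hk1 : a ^ (k + 1) = 0 := by rw [pow_succ, hk, zero_mul]
    have hfst : a.fst = 0 := by
      have h2 : a.fst ^ (k + 1) = 0 := by
        have := congrArg (fun x : Unitization ℤ R => x.fst) hk1
        rwa [fst_pow'] at this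
      exact pow_eq_zero_iff (Nat.succ_ne_zero k) |>.mp h2
    have ha : a = (a.snd : Unitization ℤ R) := by ext <;> simp [hfst]
    have hsnil : IsNilpotent a.snd := by
      refine ⟨k + 1, ?_⟩
      rw [ha, inr_pow'] at hk1
      simpa using congrArg (fun x : Unitization ℤ R => x.snd) hk1
    have hc := h a.snd hsnil
    rw [Semigroup.mem_center_iff] at hc ⊢
    intro b
    rw [ha]
    ext
    · simp [mul_comm]
    · simp only [Unitization.snd_mul, Unitization.snd_inr, Unitization.fst_inr]
      simp [hc b.snd, add_comm]
  · intro h r ⟨k, hk⟩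
    have hk1 : r ^ (k + 1) = 0 := by rw [pow_succ, hk, zero_mul]
    have hnil : IsNilpotent ((r : Unitization ℤ R)) :=
      ⟨k + 1, by rw [inr_pow', hk1, Unitization.inr_zero]⟩
    have hc := h _ hnil
    rw [Semigroup.mem_center_iff] at hc ⊢
    intro b
    have h2 := hc (b : Unitization ℤ R)
    rw [← Unitization.inr_mul, ← Unitization.inr_mul] at h2
    exact Unitization.inr_injective h2
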